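/- Finite termination certificate of Benders decomposition: if at some iteration the master optimal solution (x*, z*) is such that for every s the dual subproblem is bounded with optimal value p_s*ᵀ(h_s − T_s x*) ≤ z*_s, and strong duality holds for each subproblem, then cᵀx* + Σ_s Q_s(x*) equals the master optimal value, and x* together with optimal subproblem solutions is optimal for the full problem. -/

import Mathlib

open Matrix
open scoped BigOperators

/-- Optimal value of the Benders master problem with given cut collections. -/
noncomputable def bendersMasterVal {m p k : ℕ} {S : Type*} [Fintype S]
    (A : Matrix (Fin p) (Fin k) ℝ) (b : Fin p → ℝ) (c : Fin k → ℝ)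
    (T : S → Matrix (Fin m) (Fin k) ℝ) (h : S → Fin m → ℝ)
    (optCuts feasCuts : List (S × (Fin m → ℝ))) : EReal :=
  sInf {v : EReal | ∃ (x : Fin k → ℝ) (z : S → ℝ),
    A *ᵥ x = b ∧ 0 ≤ x ∧
    (∀ cut ∈ optCuts, cut.2 ⬝ᵥ (h cut.1 - T cut.1 *ᵥ x) ≤ z cut.1) ∧
    (∀ cut ∈ feasCuts, cut.2 ⬝ᵥ (h cut.1 - T cut.1 *ᵥ x) ≤ 0) ∧
    v = ((c ⬝ᵥ x + ∑ s, z s : ℝ) : EReal)}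

/-- Optimal value of the full problem. -/
noncomputable def bendersFullVal {m n p k : ℕ} {S : Type*} [Fintype S]
    (A : Matrix (Fin p) (Fin k) ℝ) (b : Fin p → ℝ) (c : Fin k → ℝ)
    (T : S → Matrix (Fin m) (Fin k) ℝ) (W : S → Matrix (Fin m) (Fin n) ℝ)
    (h : S → Fin m → ℝ) (q : S → Fin n → ℝ) : EReal :=
  sInf {v : EReal | ∃ (x : Fin k → ℝ) (y : S → Fin n → ℝ),
    A *ᵥ x = b ∧ 0 ≤ x ∧
    (∀ s, T s *ᵥ x + W s *ᵥ y s = h s ∧ 0 ≤ y s) ∧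
    v = ((c ⬝ᵥ x + ∑ s, q s ⬝ᵥ y s : ℝ) : EReal)}

/-- **Finite termination certificate of Benders decomposition.** Suppose the cuts of
the master are valid (optimality cuts dual-feasible, feasibility cuts dual rays), the
master optimum is attained at `(xstar, zstar)`, and for every `s` the dual subproblem
is bounded with optimal value `ps s ⬝ᵥ (h s − T s xstar) ≤ zstar s` while strong
duality holds for each subproblem (`Q_s(xstar) = Qval s = ps s ⬝ᵥ (h s − T s xstar)`).
Then `cᵀxstar + Σ_s Q_s(xstar)` equals the master optimal value and `xstar` (with
optimal subproblem solutions) is optimal for the full problem. -/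
theorem benders_termination {m n p k : ℕ} {S : Type*} [Fintype S]
    (A : Matrix (Fin p) (Fin k) ℝ) (b : Fin p → ℝ) (c : Fin k → ℝ)
    (T : S → Matrix (Fin m) (Fin k) ℝ) (W : S → Matrix (Fin m) (Fin n) ℝ)
    (h : S → Fin m → ℝ) (q : S → Fin n → ℝ)
    (optCuts feasCuts : List (S × (Fin m → ℝ)))
    (hopt : ∀ cut ∈ optCuts, cut.2 ᵥ* W cut.1 ≤ q cut.1)
    (hfeas : ∀ cut ∈ feasCuts, cut.2 ᵥ* W cut.1 ≤ 0)
    (xstar : Fin k → ℝ) (zstar : S → ℝ)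
    (hxA : A *ᵥ xstar = b) (hxpos : 0 ≤ xstar)
    (hcutO : ∀ cut ∈ optCuts, cut.2 ⬝ᵥ (h cut.1 - T cut.1 *ᵥ xstar) ≤ zstar cut.1)
    (hcutF : ∀ cut ∈ feasCuts, cut.2 ⬝ᵥ (h cut.1 - T cut.1 *ᵥ xstar) ≤ 0)
    (hattain : bendersMasterVal A b c T h optCuts feasCuts
        = ((c ⬝ᵥ xstar + ∑ s, zstar s : ℝ) : EReal))
    (ps : S → Fin m → ℝ) (hps : ∀ s, ps s ᵥ* W s ≤ q s)
    (Qval : S → ℝ)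
    (hQ : ∀ s, sInf {v : EReal | ∃ y : Fin n → ℝ,
        W s *ᵥ y = h s - T s *ᵥ xstar ∧ 0 ≤ y ∧ v = ((q s ⬝ᵥ y : ℝ) : EReal)}
        = ((Qval s : ℝ) : EReal))
    (hsd : ∀ s, Qval s = ps s ⬝ᵥ (h s - T s *ᵥ xstar))
    (hstop : ∀ s, ps s ⬝ᵥ (h s - T s *ᵥ xstar) ≤ zstar s) :
    bendersFullVal A b c T W h q = ((c ⬝ᵥ xstar + ∑ s, Qval s : ℝ) : EReal) ∧
    bendersMasterVal A b c T h optCuts feasCuts = bendersFullVal A b c T W h q := by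
  classical
  set r : ℝ := c ⬝ᵥ xstar + ∑ s, Qval s with hr
  -- Step 1: master ≤ full (master is a relaxation)
  have h1 : bendersMasterVal A b c T h optCuts feasCuts ≤ bendersFullVal A b c T W h q := by
    apply le_sInf
    rintro v ⟨x, y, hA, hx, hfy, rfl⟩
    apply sInf_le
    refine ⟨x, fun s => q s ⬝ᵥ y s, hA, hx, ?_, ?_, rfl⟩
    · intro cut hcut
      have hWy : W cut.1 *ᵥ y cut.1 = h cut.1 - T cut.1 *ᵥ x := by
        rw [eq_sub_iff_add_eq, add_comm]; exact (hfy cut.1).1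
      rw [← hWy, Matrix.dotProduct_mulVec]
      exact dotProduct_le_dotProduct_of_nonneg_right (hopt cut hcut) (hfy cut.1).2
    · intro cut hcut
      have hWy : W cut.1 *ᵥ y cut.1 = h cut.1 - T cut.1 *ᵥ x := by
        rw [eq_sub_iff_add_eq, add_comm]; exact (hfy cut.1).1
      rw [← hWy, Matrix.dotProduct_mulVec]
      calc cut.2 ᵥ* W cut.1 ⬝ᵥ y cut.1 ≤ (0 : Fin n → ℝ) ⬝ᵥ y cut.1 :=
            dotProduct_le_dotProduct_of_nonneg_right (hfeas cut hcut) (hfy cut.1).2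
        _ = 0 := zero_dotProduct _
  -- Step 2: r ≤ master value
  have h2 : ((r : ℝ) : EReal) ≤ bendersMasterVal A b c T h optCuts feasCuts := by
    rw [hattain, EReal.coe_le_coe_iff]
    refine add_le_add_right (Finset.sum_le_sum fun s _ => ?_) _
    rw [hsd s]; exact hstop s
  -- Step 3: full ≤ r (ε-approximate attainment of subproblem infima)
  have h3 : bendersFullVal A b c T W h q ≤ ((r : ℝ) : EReal) := by
    refine le_of_forall_gt_imp_ge_of_dense fun v hv => ?_
    induction v with
    | bot => exact absurd hv (by simp)
    | top => exact le_top
    | coe w =>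
      have hw : r < w := by exact_mod_cast hv
      set ε : ℝ := (w - r) / (Fintype.card S + 1) with hε
      have hεpos : 0 < ε := by
        apply div_pos (by linarith) (by positivity)
      have hy : ∀ s : S, ∃ ys : Fin n → ℝ, W s *ᵥ ys = h s - T s *ᵥ xstar ∧ 0 ≤ ys ∧
          q s ⬝ᵥ ys < Qval s + ε := by
        intro s
        have hlt : sInf {v : EReal | ∃ y : Fin n → ℝ,
            W s *ᵥ y = h s - T s *ᵥ xstar ∧ 0 ≤ y ∧ v = ((q s ⬝ᵥ y : ℝ) : EReal)}
            < ((Qval s + ε : ℝ) : EReal) := by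
          rw [hQ s, EReal.coe_lt_coe_iff]; linarith
        obtain ⟨v', hv', hlt'⟩ := sInf_lt_iff.mp hlt
        obtain ⟨ys, hWy, hys, rfl⟩ := hv'
        exact ⟨ys, hWy, hys, by exact_mod_cast hlt'⟩
      choose y hy1 hy2 hy3 using hy
      have hmem : ((c ⬝ᵥ xstar + ∑ s, q s ⬝ᵥ y s : ℝ) : EReal) ∈
          {v : EReal | ∃ (x : Fin k → ℝ) (y : S → Fin n → ℝ),
            A *ᵥ x = b ∧ 0 ≤ x ∧
            (∀ s, T s *ᵥ x + W s *ᵥ y s = h s ∧ 0 ≤ y s) ∧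
            v = ((c ⬝ᵥ x + ∑ s, q s ⬝ᵥ y s : ℝ) : EReal)} := by
        refine ⟨xstar, y, hxA, hxpos, fun s => ⟨?_, hy2 s⟩, rfl⟩
        rw [hy1 s]; ring
      refine le_trans (sInf_le hmem) ?_
      rw [EReal.coe_le_coe_iff]
      have hsum : ∑ s, q s ⬝ᵥ y s ≤ ∑ s : S, (Qval s + ε) :=
        Finset.sum_le_sum fun s _ => le_of_lt (hy3 s)
      have hcard : (Fintype.card S : ℝ) * ε ≤ w - r := by
        rw [hε]
        rw [mul_div_assoc'] at *
        rw [div_le_iff₀ (by positivity)]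
        have : (0:ℝ) ≤ w - r := by linarith
        nlinarith [Nat.cast_nonneg (α := ℝ) (Fintype.card S)]
      have : ∑ s : S, (Qval s + ε) = (∑ s, Qval s) + Fintype.card S * ε := by
        rw [Finset.sum_add_distrib, Finset.sum_const, Finset.card_univ, nsmul_eq_mul]
      rw [hr] at *
      linarith [hsum, hcard, this ▸ hsum]
  have hfull : bendersFullVal A b c T W h q = ((r : ℝ) : EReal) :=
    le_antisymm h3 (le_trans h2 h1)
  refine ⟨hfull, le_antisymm h1 ?_⟩
  rw [hfull, hattain, EReal.coe_le_coe_iff]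
  refine add_le_add_right (Finset.sum_le_sum fun s _ => ?_) _
  rw [hsd s]; exact hstop s
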